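/- Let (φ_n) be a sequence of finitely supported functions on Γ with ‖φ_n‖ ≤ 1 in the James-S norm. Then for every ε > 0 and every infinite B ⊆ ℕ there exist finitely many pairwise disjoint s_1,...,s_k ∈ S and an infinite B' ⊆ B such that for every s ∈ S with s ∩ s_i = ∅ for i = 1,...,k, one has limsup_{n∈B'} s*(φ_n) ≤ ε. Moreover k can be taken at most min{n : ε√n > 1}. -/

import Mathlib

open Set Filter Topology
open scoped Classical

variable {Γ : Type*}

/-- Sum of a finitely supported function `φ` over a set `s` (i.e. `s*(φ) = Σ_{a∈s} φ(a)`). -/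
noncomputable def segSum (s : Set Γ) (φ : Γ →₀ ℝ) : ℝ :=
  ∑ a ∈ φ.support, if a ∈ s then φ a else 0

/-- The candidate values `(Σ_i (Σ_{a∈s_i} φ(a))²)^{1/2}` over finite pairwise disjoint
families `{s_1,…,s_n} ⊆ S`. -/
noncomputable def jamesSet (S : Set (Set Γ)) (φ : Γ →₀ ℝ) : Set ℝ :=
  { r | ∃ F : Finset (Set Γ), ↑F ⊆ S ∧ (F : Set (Set Γ)).Pairwise Disjoint ∧
      r = Real.sqrt (∑ s ∈ F, (segSum s φ) ^ 2) }

/-- The James-`S` norm on finitely supported functions. -/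
noncomputable def jamesNorm (S : Set (Set Γ)) (φ : Γ →₀ ℝ) : ℝ :=
  sSup (jamesSet S φ)

/-- The characteristic function of a set, viewed in `Γ → ℝ`. -/
noncomputable def indicatorFun (s : Set Γ) : Γ → ℝ := s.indicator fun _ => 1

/-- A family of subsets of `Γ` is countably intersected (Definition 1.1). -/
structure IsCI (S : Set (Set Γ)) : Prop where
  /-- (a) pointwise closed -/
  closed : IsClosed (indicatorFun '' S)
  /-- (a) members countable -/
  countable : ∀ s ∈ S, s.Countable
  /-- (a) contains singletons -/
  singletons : ∀ γ : Γ, {γ} ∈ S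
  /-- (b) differences are finite disjoint unions of members -/
  diff : ∀ s ∈ S, ∀ t ∈ S, ∃ F : Finset (Set Γ), ↑F ⊆ S ∧
    (F : Set (Set Γ)).Pairwise Disjoint ∧ s \ t = ⋃₀ ↑F
  /-- (c) the enveloping condition -/
  env : ∃ st : Set Γ → Set Γ, (∀ t ∈ S, st t ∈ S ∧ t ⊆ st t) ∧
    ∀ s ∈ S, ∀ n : ℕ, ∀ ts : Fin n → Set Γ, (∀ i, ts i ∈ S) →
      ∃ t ∈ S, t ⊆ s \ (⋃ i, st (ts i)) ∧ (s \ ((⋃ i, st (ts i)) ∪ t)).Finite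
  /-- (d) each `L_s = {s ∩ t : t ∈ S}` is countable -/
  inter_countable : ∀ s ∈ S, { u : Set Γ | ∃ t ∈ S, u = s ∩ t }.Countable

/-- Pairing of a "dual vector" `g : Γ → ℝ` with a finitely supported function. -/
noncomputable def dPair (g : Γ → ℝ) (φ : Γ →₀ ℝ) : ℝ := ∑ a ∈ φ.support, φ a * g a

/-- The unit ball of the dual of `JS`, modelled as those `g : Γ → ℝ` whose pairing with every
finitely supported function is dominated by the James-`S` norm; the product topology on
`Γ → ℝ` is the weak-star topology on this ball. -/
def dualBall (S : Set (Set Γ)) : Set (Γ → ℝ) :=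
  { g | ∀ φ : Γ →₀ ℝ, |dPair g φ| ≤ jamesNorm S φ }

/-- The dual norm of `g` as a functional on `(Φ, ‖·‖_{J-S})`. -/
noncomputable def dualNorm (S : Set (Set Γ)) (g : Γ → ℝ) : ℝ :=
  sSup { r | ∃ φ : Γ →₀ ℝ, jamesNorm S φ ≤ 1 ∧ r = |dPair g φ| }

/-- The set `D = {Σ_{i=1}^n λ_i s_i* : s_i ∈ S pairwise disjoint, Σ λ_i² ≤ 1}`. -/
def Dset (S : Set (Set Γ)) : Set (Γ → ℝ) :=
  { g | ∃ (n : ℕ) (l : Fin n → ℝ) (s : Fin n → Set Γ), (∀ i, s i ∈ S) ∧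
      Pairwise (Function.onFun Disjoint s) ∧ (∑ i, l i ^ 2) ≤ 1 ∧
      g = fun γ => ∑ i, if γ ∈ s i then l i else 0 }



private lemma jamesSet_bddAbove (S : Set (Set Γ)) (φ : Γ →₀ ℝ) :
    BddAbove (jamesSet S φ) := by
  refine ⟨∑ a ∈ φ.support, |φ a|, ?_⟩
  rintro r ⟨F, hFS, hFd, rfl⟩
  have h1 : ∀ a : Γ, (∑ s ∈ F, if a ∈ s then |φ a| else 0) ≤ |φ a| := by
    intro a
    by_cases h : ∃ s₀ ∈ F, a ∈ s₀
    · obtain ⟨s₀, hs₀, ha₀⟩ := h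
      rw [Finset.sum_eq_single_of_mem s₀ hs₀]
      · simp [ha₀]
      · intro t ht hne
        rw [if_neg]
        intro hat
        exact (hFd (Finset.mem_coe.2 ht) (Finset.mem_coe.2 hs₀) hne).le_bot ⟨hat, ha₀⟩
    · push_neg at h
      rw [Finset.sum_eq_zero (fun t ht => if_neg (h t ht))]
      exact abs_nonneg _
  have h2 : ∑ s ∈ F, |segSum s φ| ≤ ∑ a ∈ φ.support, |φ a| := by
    calc ∑ s ∈ F, |segSum s φ|
        ≤ ∑ s ∈ F, ∑ a ∈ φ.support, (if a ∈ s then |φ a| else 0) := by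
          refine Finset.sum_le_sum fun s _ => ?_
          refine (Finset.abs_sum_le_sum_abs _ _).trans_eq ?_
          refine Finset.sum_congr rfl fun a _ => ?_
          split <;> simp
      _ = ∑ a ∈ φ.support, ∑ s ∈ F, (if a ∈ s then |φ a| else 0) := Finset.sum_comm
      _ ≤ ∑ a ∈ φ.support, |φ a| := Finset.sum_le_sum fun a _ => h1 a
  have h3 : ∑ s ∈ F, segSum s φ ^ 2 ≤ (∑ a ∈ φ.support, |φ a|) ^ 2 := by
    have h4 : ∑ s ∈ F, segSum s φ ^ 2 ≤ (∑ s ∈ F, |segSum s φ|) ^ 2 := by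
      have := Finset.sum_sq_le_sq_sum_of_nonneg
        (s := F) (f := fun s => |segSum s φ|) (fun _ _ => abs_nonneg _)
      simpa [sq_abs] using this
    exact h4.trans (pow_le_pow_left₀ (Finset.sum_nonneg fun _ _ => abs_nonneg _) h2 2)
  calc Real.sqrt (∑ s ∈ F, segSum s φ ^ 2)
      ≤ Real.sqrt ((∑ a ∈ φ.support, |φ a|) ^ 2) := Real.sqrt_le_sqrt h3
    _ = ∑ a ∈ φ.support, |φ a| :=
        Real.sqrt_sq (Finset.sum_nonneg fun _ _ => abs_nonneg _)

private lemma abs_segSum_le_jamesNorm {S : Set (Set Γ)} {t : Set Γ} (ht : t ∈ S) (φ : Γ →₀ ℝ) :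
    |segSum t φ| ≤ jamesNorm S φ := by
  have hmem : |segSum t φ| ∈ jamesSet S φ := by
    refine ⟨{t}, by simpa using ht, by simp, ?_⟩
    rw [Finset.sum_singleton, Real.sqrt_sq_eq_abs]
  exact le_csSup (jamesSet_bddAbove S φ) hmem

private lemma key_estimate {S : Set (Set Γ)} {φ : Γ →₀ ℝ} (hφ : jamesNorm S φ ≤ 1)
    {ε : ℝ} (hε : 0 < ε) {k : ℕ} {s : Fin k → Set Γ} (hS : ∀ i, s i ∈ S)
    (hd : Pairwise (Function.onFun Disjoint s)) (hb : ∀ i, ε < segSum (s i) φ) :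
    ε * Real.sqrt k ≤ 1 := by
  rcases Nat.eq_zero_or_pos k with rfl | hk
  · simp
  have hinj : Function.Injective s := by
    intro i j hij
    by_contra hne
    have hdisj := hd hne
    rw [Function.onFun, hij, disjoint_self] at hdisj
    have := hb j
    rw [hdisj] at this
    simp only [segSum, Set.bot_eq_empty, Set.mem_empty_iff_false, if_false,
      Finset.sum_const_zero] at this
    linarith
  set F : Finset (Set Γ) := Finset.univ.image s with hF
  have hmem : Real.sqrt (∑ u ∈ F, segSum u φ ^ 2) ∈ jamesSet S φ := by
    refine ⟨F, ?_, ?_, rfl⟩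
    · intro u hu
      simp only [hF, Finset.coe_image, Set.mem_image] at hu
      obtain ⟨i, _, rfl⟩ := hu
      exact hS i
    · intro x hx y hy hxy
      simp only [hF, Finset.coe_image, Set.mem_image] at hx hy
      obtain ⟨i, _, rfl⟩ := hx
      obtain ⟨j, _, rfl⟩ := hy
      exact hd fun h => hxy (by rw [h])
  have hsum : ∑ u ∈ F, segSum u φ ^ 2 = ∑ i : Fin k, segSum (s i) φ ^ 2 :=
    Finset.sum_image fun i _ j _ h => hinj h
  have hlow : (k : ℝ) * ε ^ 2 ≤ ∑ i : Fin k, segSum (s i) φ ^ 2 := by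
    have := Finset.card_nsmul_le_sum Finset.univ (fun i => segSum (s i) φ ^ 2) (ε ^ 2)
      (fun i _ => pow_le_pow_left₀ hε.le (hb i).le 2)
    simpa [nsmul_eq_mul] using this
  have h5 : ε * Real.sqrt k ≤ Real.sqrt (∑ u ∈ F, segSum u φ ^ 2) := by
    have : ε * Real.sqrt k = Real.sqrt ((k : ℝ) * ε ^ 2) := by
      rw [Real.sqrt_mul (Nat.cast_nonneg k), Real.sqrt_sq hε.le, mul_comm]
    rw [this, hsum]
    exact Real.sqrt_le_sqrt hlow
  exact h5.trans ((le_csSup (jamesSet_bddAbove S φ) hmem).trans hφ)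

private lemma lt_sInf_of_le_one {ε : ℝ} (hε : 0 < ε) {k : ℕ} (h : ε * Real.sqrt k ≤ 1) :
    k < sInf { m : ℕ | 1 < ε * Real.sqrt m } := by
  have hne : { m : ℕ | 1 < ε * Real.sqrt m }.Nonempty := by
    obtain ⟨m, hm⟩ := exists_nat_gt ((1 / ε) ^ 2)
    refine ⟨m, ?_⟩
    have h1 : (1 : ℝ) / ε < Real.sqrt m := by
      have := Real.sqrt_lt_sqrt (by positivity) hm
      rwa [Real.sqrt_sq (by positivity)] at this
    calc (1 : ℝ) = ε * (1 / ε) := by field_simp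
      _ < ε * Real.sqrt m := by exact mul_lt_mul_of_pos_left h1 hε
  have hmem := Nat.sInf_mem hne
  by_contra hcon
  push_neg at hcon
  have : Real.sqrt ((sInf { m : ℕ | 1 < ε * Real.sqrt m } : ℕ) : ℝ) ≤ Real.sqrt k :=
    Real.sqrt_le_sqrt (by exact_mod_cast hcon)
  have : ε * Real.sqrt ((sInf { m : ℕ | 1 < ε * Real.sqrt m } : ℕ) : ℝ) ≤ 1 :=
    le_trans (mul_le_mul_of_nonneg_left this hε.le) h
  exact absurd hmem (by simpa using this.not_gt)

private lemma atTop_inf_principal_neBot {B : Set ℕ} (hB : B.Infinite) :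
    (Filter.atTop ⊓ Filter.principal B).NeBot := by
  rw [Filter.inf_principal_neBot_iff]
  intro U hU
  obtain ⟨n, hn⟩ := Filter.mem_atTop_sets.1 hU
  obtain ⟨m, hm, hlt⟩ := hB.exists_gt n
  exact ⟨m, hn m hlt.le, hm⟩

/-- Claim 1 of Lemma 2.8: for `(φ_n)` in the unit ball of the James-`S` norm, every `ε > 0`
and every infinite `B ⊆ ℕ`, there are pairwise disjoint `s_1,…,s_k ∈ S`, with
`k ≤ min{m : ε√m > 1}`, and an infinite `B' ⊆ B` such that every `s ∈ S` disjoint from all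
the `s_i` satisfies `limsup_{n∈B'} s*(φ_n) ≤ ε`. -/
theorem stmt11 {Γ : Type*} (S : Set (Set Γ)) (φ : ℕ → Γ →₀ ℝ)
    (hφ : ∀ n, jamesNorm S (φ n) ≤ 1)
    (ε : ℝ) (hε : 0 < ε) (B : Set ℕ) (hB : B.Infinite) :
    ∃ (k : ℕ) (s : Fin k → Set Γ), (∀ i, s i ∈ S) ∧ Pairwise (Function.onFun Disjoint s) ∧
      k ≤ sInf { m : ℕ | 1 < ε * Real.sqrt m } ∧
      ∃ B' ⊆ B, B'.Infinite ∧ ∀ t ∈ S, (∀ i, t ∩ s i = ∅) →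
        Filter.limsup (fun n => segSum t (φ n))
          (Filter.atTop ⊓ Filter.principal B') ≤ ε := by
  set N := sInf { m : ℕ | 1 < ε * Real.sqrt m } with hN
  suffices H : ∀ j k (s : Fin k → Set Γ) (B' : Set ℕ), N - k ≤ j → (∀ i, s i ∈ S) →
      Pairwise (Function.onFun Disjoint s) → B' ⊆ B → B'.Infinite →
      (∀ n ∈ B', ∀ i, ε < segSum (s i) (φ n)) →
      ∃ (k : ℕ) (s : Fin k → Set Γ), (∀ i, s i ∈ S) ∧ Pairwise (Function.onFun Disjoint s) ∧
        k ≤ N ∧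
        ∃ B' ⊆ B, B'.Infinite ∧ ∀ t ∈ S, (∀ i, t ∩ s i = ∅) →
          Filter.limsup (fun n => segSum t (φ n))
            (Filter.atTop ⊓ Filter.principal B') ≤ ε by
    exact H N 0 (fun i => i.elim0) B (by omega) (fun i => i.elim0) (by
      intro i j h; exact i.elim0) subset_rfl hB (fun n _ i => i.elim0)
  intro j
  induction j with
  | zero =>
    intro k s B' hj hS hd hBsub hBinf hgt
    obtain ⟨n, hn⟩ := hBinf.nonempty
    have hkN : k < N :=
      lt_sInf_of_le_one hε (key_estimate (hφ n) hε hS hd (fun i => hgt n hn i))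
    omega
  | succ j ih =>
    intro k s B' hj hS hd hBsub hBinf hgt
    obtain ⟨n₀, hn₀⟩ := hBinf.nonempty
    have hkN : k < N :=
      lt_sInf_of_le_one hε (key_estimate (hφ n₀) hε hS hd (fun i => hgt n₀ hn₀ i))
    by_cases hcase : ∃ t ∈ S, (∀ i, t ∩ s i = ∅) ∧
        ε < Filter.limsup (fun n => segSum t (φ n)) (Filter.atTop ⊓ Filter.principal B')
    · obtain ⟨t, htS, htd, hlim⟩ := hcase
      haveI := atTop_inf_principal_neBot hBinf
      have hcob : Filter.IsCoboundedUnder (· ≤ ·) (Filter.atTop ⊓ Filter.principal B')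
          (fun n => segSum t (φ n)) := by
        apply Filter.IsBoundedUnder.isCoboundedUnder_le
        refine Filter.isBoundedUnder_of ⟨-1, fun n => ?_⟩
        have h1 := abs_segSum_le_jamesNorm htS (φ n)
        have h2 := hφ n
        have := abs_le.1 (h1.trans h2)
        linarith [this.1]
      have hfreq := Filter.frequently_lt_of_lt_limsup hcob hlim
      set B'' := {n ∈ B' | ε < segSum t (φ n)} with hB''
      have hB''sub : B'' ⊆ B' := fun n hn => hn.1
      have hB''inf : B''.Infinite := by
        apply Set.infinite_of_forall_exists_gt
        intro a
        have hev1 : ∀ᶠ n in Filter.atTop ⊓ Filter.principal B', a < n :=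
          (Filter.eventually_gt_atTop a).filter_mono inf_le_left
        have hev2 : ∀ᶠ n in Filter.atTop ⊓ Filter.principal B', n ∈ B' :=
          Filter.eventually_inf_principal.2 (Filter.Eventually.of_forall fun _ h => h)
        obtain ⟨b, hb1, hb2, hb3⟩ := (hfreq.and_eventually (hev1.and hev2)).exists
        exact ⟨b, ⟨hb3, hb1⟩, hb2⟩
      have hts : ∀ i, Disjoint t (s i) := fun i =>
        Set.disjoint_iff_inter_eq_empty.2 (htd i)
      refine ih (k + 1) (Fin.snoc s t) B'' (by omega) ?_ ?_ (hB''sub.trans hBsub) hB''inf ?_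
      · intro i
        rcases Fin.eq_castSucc_or_eq_last i with ⟨i', rfl⟩ | rfl
        · rw [Fin.snoc_castSucc]; exact hS i'
        · rw [Fin.snoc_last]; exact htS
      · intro i j hij
        rcases Fin.eq_castSucc_or_eq_last i with ⟨i', rfl⟩ | rfl <;>
          rcases Fin.eq_castSucc_or_eq_last j with ⟨j', rfl⟩ | rfl
        · have : i' ≠ j' := fun h => hij (by rw [h])
          simpa only [Function.onFun, Fin.snoc_castSucc] using hd this
        · simpa only [Function.onFun, Fin.snoc_castSucc, Fin.snoc_last] using (hts i').symm
        · simpa only [Function.onFun, Fin.snoc_castSucc, Fin.snoc_last] using hts j'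
        · exact absurd rfl hij
      · intro n hn i
        rcases Fin.eq_castSucc_or_eq_last i with ⟨i', rfl⟩ | rfl
        · rw [Fin.snoc_castSucc]; exact hgt n (hB''sub hn) i'
        · rw [Fin.snoc_last]; exact hn.2
    · push_neg at hcase
      exact ⟨k, s, hS, hd, hkN.le, B', hBsub, hBinf, fun t ht htd => hcase t ht htd⟩
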